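/- Let M be a matroid of rank k on a finite ground set E with |E| = 2k. The following are equivalent: (i) M is identically self-dual, i.e. M equals its dual matroid M*; (ii) M has the disjoint basis property, i.e. for every basis B of M there exists a basis C of M with B ∩ C = ∅; (iii) M has no half-coloop. -/

import Mathlib

open Set

/-- The closure of any set in a matroid is a flat. -/
lemma Matroid.flat_closure' {α : Type*} (M : Matroid α) (X : Set α) :
    M.IsFlat (M.closure X) := by
  refine ⟨fun I Y hI hIY => ?_, M.closure_subset_ground X⟩
  have h1 : M.closure I = M.closure X := by
    rw [hI.closure_eq_closure, Matroid.closure_closure]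
  exact hIY.subset_closure.trans h1.le

/-- An element `e` of the ground set of a matroid `M` of rank `k` is a *half-coloop* if
there exist (not necessarily distinct) flats `F₁, F₂` of `M`, each of rank `k - 1`,
with `F₁ ∪ F₂ = M.E \ {e}`. -/
def Matroid.IsHalfColoop {α : Type*} (M : Matroid α) (k : ℕ) (e : α) : Prop :=
  ∃ F₁ F₂ : Set α, M.IsFlat F₁ ∧ M.IsFlat F₂ ∧
    (∃ I : Set α, M.IsBasis I F₁ ∧ I.ncard = k - 1) ∧
    (∃ I : Set α, M.IsBasis I F₂ ∧ I.ncard = k - 1) ∧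
    F₁ ∪ F₂ = M.E \ {e}

/-- For a matroid `M` of rank `k` on a finite ground set of size `2k`,
the following are equivalent: (i) `M` is identically self-dual (`M = M✶`);
(ii) `M` has the disjoint basis property; (iii) `M` has no half-coloop. -/
theorem selfDual_tfae {α : Type*} (M : Matroid α) (k : ℕ)
    (hfin : M.E.Finite) (hcard : M.E.ncard = 2 * k)
    (hrk : ∀ B : Set α, M.IsBase B → B.ncard = k) :
    List.TFAE [
      M = M✶,
      ∀ B : Set α, M.IsBase B → ∃ C : Set α, M.IsBase C ∧ B ∩ C = ∅,
      ¬ ∃ e ∈ M.E, M.IsHalfColoop k e] := by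
  classical
  have hfinsub : ∀ X : Set α, X ⊆ M.E → X.Finite := fun X hX => hfin.subset hX
  -- an independent set of size `k` is a base
  have hbase_of : ∀ I : Set α, M.Indep I → I.ncard = k → M.IsBase I := by
    intro I hI hIc
    obtain ⟨B, hB, hIB⟩ := hI.exists_isBase_superset
    have hBfin : B.Finite := hfinsub B hB.subset_ground
    have hIB' : I = B :=
      Set.eq_of_subset_of_ncard_le hIB (by rw [hrk B hB, hIc]) hBfin
    rwa [hIB']
  -- an independent subset of a set with a basis `J` has at most `J.ncard` elements
  have hindep_le : ∀ I J F : Set α, M.Indep I → I ⊆ F → M.IsBasis J F →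
      I.ncard ≤ J.ncard := by
    intro I J F hI hIF hJ
    obtain ⟨J', hJ', hIJ'⟩ := hI.subset_isBasis_of_subset hIF hJ.subset_ground
    have hcardeq : J'.ncard = J.ncard := by
      rw [Set.ncard_def, Set.ncard_def, hJ'.encard_eq_encard hJ]
    have hJ'fin : J'.Finite := hfinsub _ (hJ'.indep.subset_ground)
    exact (Set.ncard_le_ncard hIJ' hJ'fin).trans hcardeq.le
  have hcomplcard : ∀ B : Set α, M.IsBase B → (M.E \ B).ncard = k := by
    intro B hB
    rw [Set.ncard_diff hB.subset_ground (hfinsub B hB.subset_ground), hcard, hrk B hB]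
    omega
  have hkey : (∀ B, M.IsBase B → M.IsBase (M.E \ B)) → M = M✶ := by
    intro hP
    refine Matroid.ext_isBase (by simp) fun B hBE => ?_
    rw [Matroid.dual_isBase_iff hBE]
    exact ⟨fun hB => hP B hB,
      fun hB => by simpa [Set.diff_diff_cancel_left hBE] using hP _ hB⟩
  tfae_have 1 → 2 := by
    intro h B hB
    have hB' : M✶.IsBase B := h ▸ hB
    exact ⟨M.E \ B, (Matroid.dual_isBase_iff hB.subset_ground).mp hB',
      Set.inter_diff_self _ _⟩
  tfae_have 2 → 1 := by
    intro h
    apply hkey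
    intro B hB
    obtain ⟨C, hC, hBC⟩ := h B hB
    have hCs : C ⊆ M.E \ B := Set.subset_diff.mpr
      ⟨hC.subset_ground, (Set.disjoint_iff_inter_eq_empty.mpr hBC).symm⟩
    have hCeq : C = M.E \ B := Set.eq_of_subset_of_ncard_le hCs
      (by rw [hrk C hC, hcomplcard B hB]) (hfinsub _ Set.diff_subset)
    rwa [← hCeq]
  tfae_have 1 → 3 := by
    intro h
    rintro ⟨e, he, F₁, F₂, hF₁, hF₂, ⟨I₁, hI₁, hI₁c⟩, -, hU⟩
    have hk : 1 ≤ k := by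
      have h0 : 0 < M.E.ncard := (Set.ncard_pos hfin).mpr ⟨e, he⟩
      omega
    have hF₁sub : F₁ ⊆ M.E \ {e} := by rw [← hU]; exact Set.subset_union_left
    have hF₂sub : F₂ ⊆ M.E \ {e} := by rw [← hU]; exact Set.subset_union_right
    have heF₁ : e ∉ F₁ := fun hx => (hF₁sub hx).2 rfl
    have heF₂ : e ∉ F₂ := fun hx => (hF₂sub hx).2 rfl
    have heI₁ : e ∉ I₁ := fun hx => heF₁ (hI₁.subset hx)
    have hclI₁ : M.closure I₁ = F₁ := by
      rw [hI₁.closure_eq_closure, hF₁.closure]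
    have hBi : M.Indep (insert e I₁) := by
      rw [← M.not_dep_iff (Set.insert_subset he hI₁.indep.subset_ground)]
      intro hdep
      exact heF₁ (hclI₁ ▸ (hI₁.indep.mem_closure_iff_of_notMem heI₁).mpr hdep)
    have hBc : (insert e I₁).ncard = k := by
      rw [Set.ncard_insert_of_notMem heI₁ (hfinsub _ hI₁.indep.subset_ground), hI₁c]
      omega
    have hBbase : M.IsBase (insert e I₁) := hbase_of _ hBi hBc
    set X := F₂ \ F₁ with hX
    have hXsub : X ⊆ M.E := Set.diff_subset.trans hF₂.subset_ground
    have heX : e ∉ X := fun hx => heF₂ hx.1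
    have hBdisj : insert e I₁ ⊆ M.E \ X := by
      rw [Set.insert_subset_iff]
      exact ⟨⟨he, heX⟩, fun x hx =>
        ⟨hI₁.indep.subset_ground hx, fun hxX => hxX.2 (hI₁.subset hx)⟩⟩
    have hXindep : M.Indep X := by
      have hco : M✶.Indep X := (Matroid.coindep_iff_exists hXsub).mpr ⟨_, hBbase, hBdisj⟩
      rwa [← h] at hco
    have hcompl : M.E \ insert e X = F₁ := by
      ext x
      constructor
      · rintro ⟨hxE, hx⟩
        have hx1 : x ≠ e := fun hh => hx (Or.inl hh)
        have hx2 : x ∈ F₁ ∪ F₂ := by rw [hU]; exact ⟨hxE, hx1⟩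
        rcases hx2 with h1 | h2
        · exact h1
        · by_contra hxF₁
          exact hx (Or.inr ⟨h2, hxF₁⟩)
      · intro hxF₁
        refine ⟨hF₁.subset_ground hxF₁, ?_⟩
        rintro (rfl | hxX)
        · exact heF₁ hxF₁
        · exact hxX.2 hxF₁
    have hdepins : M.Dep (insert e X) := by
      rw [Matroid.dep_iff]
      refine ⟨fun hind => ?_, Set.insert_subset he hXsub⟩
      have hco : M.Coindep (insert e X) := by
        rw [Matroid.coindep_def, ← h]; exact hind
      obtain ⟨B', hB', hB'sub⟩ := hco.exists_isBase_subset_compl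
      rw [hcompl] at hB'sub
      have hle := hindep_le B' I₁ F₁ hB'.indep hB'sub hI₁
      rw [hrk B' hB', hI₁c] at hle
      omega
    have hecl : e ∈ M.closure X :=
      (hXindep.mem_closure_iff_of_notMem heX).mpr hdepins
    have hsub2 : M.closure X ⊆ F₂ := by
      rw [← hF₂.closure]; exact M.closure_subset_closure Set.diff_subset
    exact heF₂ (hsub2 hecl)
  tfae_have 3 → 1 := by
    intro h3
    by_contra hne
    apply h3
    obtain ⟨B, hB, hnB⟩ : ∃ B, M.IsBase B ∧ ¬ M.IsBase (M.E \ B) := by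
      by_contra hall
      push_neg at hall
      exact hne (hkey hall)
    set D := M.E \ B with hD
    have hDsub : D ⊆ M.E := Set.diff_subset
    have hDfin : D.Finite := hfinsub _ hDsub
    have hDcard : D.ncard = k := hcomplcard B hB
    have hDdep : M.Dep D := by
      rw [Matroid.dep_iff]
      exact ⟨fun hind => hnB (hbase_of _ hind hDcard), hDsub⟩
    have hk : 1 ≤ k := by
      have h1 := (Set.ncard_pos hDfin).mpr hDdep.nonempty
      omega
    obtain ⟨J, hJ⟩ := M.exists_isBasis D hDsub
    have hJne : J ≠ D := fun hh => (Matroid.dep_iff.mp hDdep).1 (hh ▸ hJ.indep)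
    have hJlt : J.ncard < k := by
      have := Set.ncard_lt_ncard (ssubset_of_subset_of_ne hJ.subset hJne) hDfin
      omega
    obtain ⟨B', hB', hJB'⟩ := hJ.indep.exists_isBase_superset
    obtain ⟨S, hJS, hSB', hScard⟩ := Set.exists_subsuperset_card_eq hJB'
      (n := k - 1) (by omega) (by rw [hrk B' hB']; omega)
    have hSindep : M.Indep S := hB'.indep.subset hSB'
    have hF₂flat : M.IsFlat (M.closure S) := M.flat_closure' S
    have hSFbasis : M.IsBasis S (M.closure S) := hSindep.isBasis_closure
    have hDF₂ : D ⊆ M.closure S :=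
      hJ.subset_closure.trans (M.closure_subset_closure hJS)
    obtain ⟨e, heB, heF₂⟩ : ∃ e ∈ B, e ∉ M.closure S := by
      by_contra hcon
      push_neg at hcon
      have hle := hindep_le B S (M.closure S) hB.indep hcon hSFbasis
      rw [hrk B hB, hScard] at hle
      omega
    have heE : e ∈ M.E := hB.subset_ground heB
    have hBdiff_indep : M.Indep (B \ {e}) := hB.indep.subset Set.diff_subset
    have hF₁flat : M.IsFlat (M.closure (B \ {e})) := M.flat_closure' _
    have hF₁basis : M.IsBasis (B \ {e}) (M.closure (B \ {e})) := hBdiff_indep.isBasis_closure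
    have hBfin : B.Finite := hfinsub _ hB.subset_ground
    have hF₁card : (B \ {e}).ncard = k - 1 := by
      rw [Set.ncard_diff_singleton_of_mem heB, hrk B hB]
    have heF₁ : e ∉ M.closure (B \ {e}) := hB.indep.notMem_closure_sdiff_of_mem heB
    refine ⟨e, heE, M.closure (B \ {e}), M.closure S, hF₁flat, hF₂flat,
      ⟨_, hF₁basis, hF₁card⟩, ⟨S, hSFbasis, hScard⟩, ?_⟩
    apply subset_antisymm
    · rintro x (hx | hx)
      · exact ⟨hF₁flat.subset_ground hx, fun hh => heF₁ (by rwa [hh] at hx)⟩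
      · exact ⟨hF₂flat.subset_ground hx, fun hh => heF₂ (by rwa [hh] at hx)⟩
    · rintro x ⟨hxE, hxe⟩
      by_cases hxB : x ∈ B
      · exact Or.inl (M.subset_closure _ (Set.diff_subset.trans hB.subset_ground)
          ⟨hxB, hxe⟩)
      · exact Or.inr (hDF₂ ⟨hxE, hxB⟩)
  tfae_finish
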